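/- Let μ ∈ (0,1) and let I ⊆ ℝ be an interval. Suppose r : I → ℝ and θ : I → ℝ are differentiable, with μ < r(t) ≤ 1, r'(t) = μ√(1 − μ²/r(t)²), and θ'(t) = μ²/r(t)² − 1 for all t ∈ I. Then the function t ↦ V(r(t), θ(t)) is constant on I, where V(r,θ) = θ − √(1/μ² − 1) + arccos μ + √(r²/μ² − 1) − arccos(μ/r). -/

import Mathlib

/-- Along the classical equilibrium flow
(`r' = μ√(1 − μ²/r²)`, `θ' = μ²/r² − 1`, with `μ < r ≤ 1`) on an interval `I`,
the classical Value function
`V(r,θ) = θ − √(1/μ² − 1) + arccos μ + √(r²/μ² − 1) − arccos(μ/r)` is constant. -/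
theorem stmt_2 (μ : ℝ) (hμ : μ ∈ Set.Ioo (0 : ℝ) 1)
    (I : Set ℝ) (hI : I.OrdConnected)
    (r θ : ℝ → ℝ)
    (hr : ∀ t ∈ I, HasDerivAt r (μ * Real.sqrt (1 - μ ^ 2 / (r t) ^ 2)) t)
    (hθ : ∀ t ∈ I, HasDerivAt θ (μ ^ 2 / (r t) ^ 2 - 1) t)
    (hrange : ∀ t ∈ I, μ < r t ∧ r t ≤ 1)
    (V : ℝ → ℝ → ℝ)
    (hV : ∀ x y : ℝ, V x y =
      y - Real.sqrt (1 / μ ^ 2 - 1) + Real.arccos μ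
        + Real.sqrt (x ^ 2 / μ ^ 2 - 1) - Real.arccos (μ / x)) :
    ∀ t ∈ I, ∀ t' ∈ I, V (r t) (θ t) = V (r t') (θ t') := by
  obtain ⟨hμ0, hμ1⟩ := hμ
  set F : ℝ → ℝ := fun t =>
    θ t - Real.sqrt (1 / μ ^ 2 - 1) + Real.arccos μ
      + Real.sqrt ((r t) ^ 2 / μ ^ 2 - 1) - Real.arccos (μ / r t) with hF
  have key : ∀ t ∈ I, HasDerivAt F 0 t := by
    intro t ht
    obtain ⟨hlt, hle⟩ := hrange t ht
    set x := r t with hx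
    have hx0 : 0 < x := hμ0.trans hlt
    have hxne : x ≠ 0 := hx0.ne'
    have hμne : μ ≠ 0 := hμ0.ne'
    have hsq : μ ^ 2 < x ^ 2 := by nlinarith
    have hS0 : 0 < x ^ 2 - μ ^ 2 := by linarith
    -- abbreviation
    set S := Real.sqrt (x ^ 2 - μ ^ 2) with hSdef
    have hSpos : 0 < S := Real.sqrt_pos.mpr hS0
    have hS2 : S ^ 2 = x ^ 2 - μ ^ 2 := Real.sq_sqrt hS0.le
    -- key sqrt identities
    have e1 : Real.sqrt (x ^ 2 / μ ^ 2 - 1) = S / μ := by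
      rw [show x ^ 2 / μ ^ 2 - 1 = (x ^ 2 - μ ^ 2) / μ ^ 2 by field_simp]
      rw [Real.sqrt_div hS0.le, Real.sqrt_sq hμ0.le]
    have e2 : Real.sqrt (1 - μ ^ 2 / x ^ 2) = S / x := by
      rw [show 1 - μ ^ 2 / x ^ 2 = (x ^ 2 - μ ^ 2) / x ^ 2 by field_simp]
      rw [Real.sqrt_div hS0.le, Real.sqrt_sq hx0.le]
    have e3 : Real.sqrt (1 - (μ / x) ^ 2) = S / x := by
      rw [show (1 : ℝ) - (μ / x) ^ 2 = 1 - μ ^ 2 / x ^ 2 by ring]; exact e2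
    -- derivative of the sqrt term
    have hrt := hr t ht
    have hsqrt : HasDerivAt (fun s => Real.sqrt ((r s) ^ 2 / μ ^ 2 - 1))
        ((2 * r t ^ 1 * (μ * Real.sqrt (1 - μ ^ 2 / (r t) ^ 2)) / μ ^ 2) /
          (2 * Real.sqrt ((r t) ^ 2 / μ ^ 2 - 1))) t := by
      apply HasDerivAt.sqrt
      · exact ((hrt.pow 2).div_const (μ ^ 2)).sub_const 1
      · rw [← hx]
        have : (0:ℝ) < x ^ 2 / μ ^ 2 - 1 := by
          rw [show x ^ 2 / μ ^ 2 - 1 = (x ^ 2 - μ ^ 2) / μ ^ 2 by field_simp]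
          positivity
        linarith
    -- derivative of the arccos term
    have hdiv : HasDerivAt (fun s => μ / r s)
        ((0 * r t - μ * (μ * Real.sqrt (1 - μ ^ 2 / (r t) ^ 2))) / (r t) ^ 2) t :=
      (hasDerivAt_const t μ).div hrt (by rw [← hx]; exact hxne)
    have hu1 : μ / x ≠ -1 := by
      have : 0 < μ / x := by positivity
      linarith
    have hu2 : μ / x ≠ 1 := by
      have : μ / x < 1 := (div_lt_one hx0).mpr hlt
      linarith
    have harccos : HasDerivAt (fun s => Real.arccos (μ / r s))
        ((-(1 / Real.sqrt (1 - (μ / r t) ^ 2))) *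
          ((0 * r t - μ * (μ * Real.sqrt (1 - μ ^ 2 / (r t) ^ 2))) / (r t) ^ 2)) t := by
      exact (Real.hasDerivAt_arccos (by rw [← hx]; exact hu1)
        (by rw [← hx]; exact hu2)).comp t hdiv
    have hθt := hθ t ht
    have hsum := (((hθt.sub_const (Real.sqrt (1 / μ ^ 2 - 1))).add_const
        (Real.arccos μ)).add hsqrt).sub harccos
    have hzero :
        (μ ^ 2 / (r t) ^ 2 - 1 +
          2 * r t ^ 1 * (μ * Real.sqrt (1 - μ ^ 2 / (r t) ^ 2)) / μ ^ 2 /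
            (2 * Real.sqrt ((r t) ^ 2 / μ ^ 2 - 1)) -
          -(1 / Real.sqrt (1 - (μ / r t) ^ 2)) *
            ((0 * r t - μ * (μ * Real.sqrt (1 - μ ^ 2 / (r t) ^ 2))) / (r t) ^ 2)) = 0 := by
      rw [← hx, e1, e2, e3]
      field_simp
      nlinarith [hS2, hSpos, hx0]
    have : HasDerivAt F 0 t := by
      rw [hF]
      exact hsum.congr_deriv hzero
    exact this
  intro t ht t' ht'
  have hconv : Convex ℝ I := hI.convex
  have hlip := hconv.norm_image_sub_le_of_norm_hasDerivWithin_le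
    (f := F) (f' := fun _ => (0:ℝ)) (C := 0)
    (fun s hs => (key s hs).hasDerivWithinAt) (fun s _ => by simp) ht' ht
  have : F t = F t' := by
    have := hlip
    simp at this
    linarith [abs_nonneg (F t - F t'), this]
  simpa [hF, hV] using this
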